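/- Let J be a closed interval or a circle, and let γ : J → ℝⁿ, n ≥ 4, be an injective continuous map of bounded variation. Let P : ℝⁿ → ℝⁿ⁻¹ be the projection onto the last n−1 coordinates. Then for every ε > 0 there exists a linear map T : ℝⁿ → ℝⁿ⁻¹ with operator norm ‖T − P‖ < ε such that T ∘ γ is injective. -/

import Mathlib

open Set
open scoped NNReal ENNReal


theorem key_ineq {n : ℕ} {a b : ℝ} {γ : ℝ → EuclideanSpace ℝ (Fin n)}
    (h : BoundedVariationOn γ (Icc a b)) {s t : ℝ} (hs : s ∈ Icc a b) (ht : t ∈ Icc a b)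
    (hst : s ≤ t) :
    dist (γ s) (γ t) ≤ variationOnFromTo γ (Icc a b) s t := by
  rw [variationOnFromTo.eq_of_le _ _ hst, dist_edist]
  apply ENNReal.toReal_le_toReal (edist_ne_top _ _)
    (fun h' => h (le_antisymm le_top (h' ▸ eVariationOn.mono γ inter_subset_left))) |>.2
  exact eVariationOn.edist_le γ ⟨hs, le_refl s, hst⟩ ⟨ht, hst, le_refl t⟩

theorem bv_factor {n : ℕ} {a b : ℝ} {γ : ℝ → EuclideanSpace ℝ (Fin n)}
    (h : BoundedVariationOn γ (Icc a b)) :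
    ∃ (A : Set ℝ) (g : ℝ → EuclideanSpace ℝ (Fin n)),
      LipschitzOnWith 1 g A ∧ γ '' (Icc a b) ⊆ g '' A := by
  classical
  set s := Icc a b
  set ℓ : ℝ → ℝ := variationOnFromTo γ s a with hℓ
  have hLBV : LocallyBoundedVariationOn γ s := h.locallyBoundedVariationOn
  have hkey : ∀ {x y : ℝ}, x ∈ s → y ∈ s → dist (γ x) (γ y) ≤ dist (ℓ x) (ℓ y) := by
    intro x y hx hy
    rcases le_total x y with hxy | hxy
    · have hadd := variationOnFromTo.add hLBV (left_mem_Icc.2 (hx.1.trans hx.2)) hx hy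
      have : ℓ y - ℓ x = variationOnFromTo γ s x y := by simp only [hℓ]; linarith
      calc dist (γ x) (γ y) ≤ variationOnFromTo γ s x y := key_ineq h hx hy hxy
        _ = ℓ y - ℓ x := this.symm
        _ ≤ |ℓ y - ℓ x| := le_abs_self _
        _ = dist (ℓ x) (ℓ y) := by rw [Real.dist_eq, abs_sub_comm]
    · have hadd := variationOnFromTo.add hLBV (left_mem_Icc.2 (hx.1.trans hx.2)) hy hx
      have : ℓ x - ℓ y = variationOnFromTo γ s y x := by simp only [hℓ]; linarith
      calc dist (γ x) (γ y) = dist (γ y) (γ x) := dist_comm _ _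
        _ ≤ variationOnFromTo γ s y x := key_ineq h hy hx hxy
        _ = ℓ x - ℓ y := this.symm
        _ ≤ |ℓ x - ℓ y| := le_abs_self _
        _ = dist (ℓ x) (ℓ y) := by rw [Real.dist_eq]
  refine ⟨ℓ '' s, γ ∘ Function.invFunOn ℓ s, ?_, ?_⟩
  · rw [lipschitzOnWith_iff_dist_le_mul]
    intro y₁ h₁ y₂ h₂
    have m₁ := Function.invFunOn_mem h₁
    have e₁ := Function.invFunOn_eq (f := ℓ) h₁
    have m₂ := Function.invFunOn_mem h₂
    have e₂ := Function.invFunOn_eq (f := ℓ) h₂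
    simpa [Function.comp, e₁, e₂] using (hkey m₁ m₂).trans_eq (by rw [e₁, e₂])
  · rintro _ ⟨t, ht, rfl⟩
    refine ⟨ℓ t, mem_image_of_mem ℓ ht, ?_⟩
    have hmem : ℓ t ∈ ℓ '' s := mem_image_of_mem ℓ ht
    have m := Function.invFunOn_mem (f := ℓ) hmem
    have e := Function.invFunOn_eq (f := ℓ) hmem
    have : dist (γ (Function.invFunOn ℓ s (ℓ t))) (γ t) ≤ dist (ℓ (Function.invFunOn ℓ s (ℓ t))) (ℓ t) := hkey m ht
    rw [e] at this
    simp only [dist_self] at this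
    exact dist_le_zero.1 this



theorem core_perturb {n : ℕ} (hn : 4 ≤ n)
    (P : EuclideanSpace ℝ (Fin n) →L[ℝ] EuclideanSpace ℝ (Fin (n - 1)))
    (hP : ∀ (z : EuclideanSpace ℝ (Fin n)) (i : Fin (n - 1)),
      P z i = z ⟨(i : ℕ) + 1, Nat.add_lt_of_lt_sub i.isLt⟩)
    (K : Set (EuclideanSpace ℝ (Fin n)))
    (hK : ∃ (A : Set ℝ) (g : ℝ → EuclideanSpace ℝ (Fin n)),
      LipschitzOnWith 1 g A ∧ K ⊆ g '' A)
    {ε : ℝ} (hε : 0 < ε) :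
    ∃ T : EuclideanSpace ℝ (Fin n) →L[ℝ] EuclideanSpace ℝ (Fin (n - 1)),
      ‖T - P‖ < ε ∧ ∀ x ∈ K, ∀ y ∈ K, T x = T y → x = y := by
  classical
  have h0n : 0 < n := by omega
  set i₀ : Fin n := ⟨0, h0n⟩
  set π : EuclideanSpace ℝ (Fin n) →L[ℝ] ℝ := EuclideanSpace.proj i₀ with hπ
  set F : EuclideanSpace ℝ (Fin n) × EuclideanSpace ℝ (Fin n) → EuclideanSpace ℝ (Fin (n - 1)) :=
    fun p => (-(π (p.1 - p.2))⁻¹) • P (p.1 - p.2) with hF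
  set S : Set (EuclideanSpace ℝ (Fin n) × EuclideanSpace ℝ (Fin n)) :=
    (K ×ˢ K) ∩ {p | π (p.1 - p.2) ≠ 0} with hS
  -- dimension bound on S
  obtain ⟨A, g, hg, hKg⟩ := hK
  have hGlip : LipschitzOnWith 1 (Prod.map g g) (A ×ˢ A) := by
    intro p hp q hq
    rw [Prod.edist_eq, Prod.edist_eq]
    simp only [Prod.map_fst, Prod.map_snd, ENNReal.coe_one, one_mul]
    exact max_le_max (by simpa using hg hp.1 hq.1) (by simpa using hg hp.2 hq.2)
  have hSsub : S ⊆ Prod.map g g '' (A ×ˢ A) := by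
    rintro ⟨x, y⟩ ⟨⟨hx, hy⟩, -⟩
    obtain ⟨a₁, ha₁, hg₁⟩ := hKg hx
    obtain ⟨a₂, ha₂, hg₂⟩ := hKg hy
    exact ⟨(a₁, a₂), ⟨ha₁, ha₂⟩, by rw [Prod.map_apply, hg₁, hg₂]⟩
  have hdimS : dimH S ≤ 2 := by
    calc dimH S ≤ dimH (Prod.map g g '' (A ×ˢ A)) := dimH_mono hSsub
      _ ≤ dimH (A ×ˢ A) := hGlip.dimH_image_le
      _ ≤ dimH (univ : Set (ℝ × ℝ)) := dimH_mono (subset_univ _)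
      _ = 2 := by
          rw [Real.dimH_univ_eq_finrank]
          norm_num
  -- F is locally Lipschitz on S
  have hFlip : ∀ x ∈ S, ∃ C : ℝ≥0, ∃ t ∈ nhdsWithin x S, LipschitzOnWith C F t := by
    rintro x ⟨-, hx0⟩
    have hsub : ContDiff ℝ 1 (fun p : EuclideanSpace ℝ (Fin n) × EuclideanSpace ℝ (Fin n) =>
        p.1 - p.2) := contDiff_fst.sub contDiff_snd
    have hc : ContDiffAt ℝ 1 (fun p : EuclideanSpace ℝ (Fin n) × EuclideanSpace ℝ (Fin n) =>
        π (p.1 - p.2)) x := (π.contDiff.comp hsub).contDiffAt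
    have hPc : ContDiffAt ℝ 1 (fun p : EuclideanSpace ℝ (Fin n) × EuclideanSpace ℝ (Fin n) =>
        P (p.1 - p.2)) x := (P.contDiff.comp hsub).contDiffAt
    have hFc : ContDiffAt ℝ 1 F x := ((hc.inv hx0).neg).smul hPc
    obtain ⟨C, t, ht, hl⟩ := hFc.exists_lipschitzOnWith
    exact ⟨C, t, nhdsWithin_le_nhds ht, hl⟩
  have hdimB : dimH (F '' S) ≤ 2 :=
    le_trans (dimH_image_le_of_locally_lipschitzOn hFlip) hdimS
  -- pick v
  have hlt : dimH (F '' S) < (Module.finrank ℝ (EuclideanSpace ℝ (Fin (n - 1))) : ℝ≥0∞) := by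
    refine lt_of_le_of_lt hdimB ?_
    rw [finrank_euclideanSpace_fin]
    exact_mod_cast (by omega : 2 < n - 1)
  have hd : Dense (F '' S)ᶜ := dense_compl_of_dimH_lt_finrank hlt
  obtain ⟨v, hvB, hvb⟩ := hd.exists_mem_open Metric.isOpen_ball ⟨0, Metric.mem_ball_self hε⟩
  refine ⟨P + π.smulRight v, ?_, ?_⟩
  · have hTP : (P + π.smulRight v) - P = π.smulRight v := add_sub_cancel_left P _
    rw [hTP]
    have hb : ‖π.smulRight v‖ ≤ ‖v‖ := by
      refine ContinuousLinearMap.opNorm_le_bound _ (norm_nonneg v) fun z => ?_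
      rw [ContinuousLinearMap.smulRight_apply, norm_smul]
      have hz : ‖π z‖ ≤ ‖z‖ := by
        show |z i₀| ≤ ‖z‖
        rw [EuclideanSpace.norm_eq, ← Real.sqrt_sq_eq_abs]
        apply Real.sqrt_le_sqrt
        exact (Finset.single_le_sum (f := fun j => ‖z j‖ ^ 2) (fun j _ => by positivity)
          (Finset.mem_univ i₀)).trans_eq' (by rw [Real.norm_eq_abs, sq_abs])
      calc ‖π z‖ * ‖v‖ ≤ ‖z‖ * ‖v‖ := mul_le_mul_of_nonneg_right hz (norm_nonneg v)
        _ = ‖v‖ * ‖z‖ := mul_comm _ _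
    calc ‖π.smulRight v‖ ≤ ‖v‖ := hb
      _ < ε := by simpa [dist_eq_norm] using hvb
  · intro x hx y hy hxy
    by_contra hne
    have hdne : x - y ≠ 0 := sub_ne_zero.2 hne
    have hTd : P (x - y) + π (x - y) • v = 0 := by
      have h1 : (P + π.smulRight v) (x - y) = 0 := by rw [map_sub, hxy, sub_self]
      simpa [ContinuousLinearMap.add_apply, ContinuousLinearMap.smulRight_apply] using h1
    rcases eq_or_ne (π (x - y)) 0 with h0 | h0
    · have hPd : P (x - y) = 0 := by simpa [h0] using hTd
      apply hdne
      ext i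
      show (x - y) i = 0
      rcases Nat.eq_zero_or_pos (i : ℕ) with hi | hi
      · have hii : i = i₀ := Fin.ext hi
        rw [hii]
        exact h0
      · have hilt := i.isLt
        have h2 := hP (x - y) ⟨(i : ℕ) - 1, by omega⟩
        have h3 : (x - y) i = P (x - y) ⟨(i : ℕ) - 1, by omega⟩ := by
          rw [h2]
          exact congrArg (x - y) (Fin.ext (by simp only [Fin.val_mk]; omega)).symm
        rw [h3, hPd]
        rfl
    · apply hvB
      have hveq : v = (-(π (x - y))⁻¹) • P (x - y) := by
        have h1 : π (x - y) • v = -(P (x - y)) := by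
          rw [add_comm] at hTd
          exact eq_neg_of_add_eq_zero_left hTd
        calc v = (π (x - y))⁻¹ • (π (x - y) • v) := by
              rw [smul_smul, inv_mul_cancel₀ h0, one_smul]
          _ = (π (x - y))⁻¹ • (-(P (x - y))) := by rw [h1]
          _ = (-(π (x - y))⁻¹) • P (x - y) := by rw [smul_neg, neg_smul]
      exact ⟨(x, y), ⟨⟨hx, hy⟩, h0⟩, hveq.symm⟩

/-- Let `J` be a closed interval or a circle (the latter modeled by `2π`-periodic maps on `ℝ`,
injective on a period), and let `γ : J → ℝⁿ`, `n ≥ 4`, be an injective continuous map of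
bounded variation.  If `P : ℝⁿ → ℝⁿ⁻¹` is the projection onto the last `n-1` coordinates,
then for every `ε > 0` there is a linear map `T` with `‖T - P‖ < ε` such that `T ∘ γ` is
injective. -/
theorem stmt_6 {n : ℕ} (hn : 4 ≤ n)
    (P : EuclideanSpace ℝ (Fin n) →L[ℝ] EuclideanSpace ℝ (Fin (n - 1)))
    (hP : ∀ (z : EuclideanSpace ℝ (Fin n)) (i : Fin (n - 1)),
      P z i = z ⟨(i : ℕ) + 1, by have := i.isLt; omega⟩) :
    (∀ (a b : ℝ) (γ : ℝ → EuclideanSpace ℝ (Fin n)),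
      ContinuousOn γ (Icc a b) → BoundedVariationOn γ (Icc a b) →
      InjOn γ (Icc a b) → ∀ ε > (0 : ℝ),
      ∃ T : EuclideanSpace ℝ (Fin n) →L[ℝ] EuclideanSpace ℝ (Fin (n - 1)),
        ‖T - P‖ < ε ∧ InjOn (fun t => T (γ t)) (Icc a b))
    ∧
    (∀ γ : ℝ → EuclideanSpace ℝ (Fin n), Continuous γ →
      (∀ t, γ (t + 2 * Real.pi) = γ t) →
      BoundedVariationOn γ (Icc 0 (2 * Real.pi)) →
      InjOn γ (Ico 0 (2 * Real.pi)) → ∀ ε > (0 : ℝ),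
      ∃ T : EuclideanSpace ℝ (Fin n) →L[ℝ] EuclideanSpace ℝ (Fin (n - 1)),
        ‖T - P‖ < ε ∧ InjOn (fun t => T (γ t)) (Ico 0 (2 * Real.pi))) := by
  have main : ∀ (a b : ℝ) (γ : ℝ → EuclideanSpace ℝ (Fin n)),
      BoundedVariationOn γ (Icc a b) → ∀ ε > (0 : ℝ),
      ∃ T : EuclideanSpace ℝ (Fin n) →L[ℝ] EuclideanSpace ℝ (Fin (n - 1)),
        ‖T - P‖ < ε ∧ ∀ x ∈ γ '' Icc a b, ∀ y ∈ γ '' Icc a b, T x = T y → x = y := by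
    intro a b γ hbv ε hε
    exact core_perturb hn P hP (γ '' Icc a b) (bv_factor hbv) hε
  constructor
  · intro a b γ _ hbv hinj ε hε
    obtain ⟨T, hT, hTinj⟩ := main a b γ hbv ε hε
    refine ⟨T, hT, fun s hs t ht heq => ?_⟩
    exact hinj hs ht (hTinj _ (mem_image_of_mem γ hs) _ (mem_image_of_mem γ ht) heq)
  · intro γ _ _ hbv hinj ε hε
    obtain ⟨T, hT, hTinj⟩ := main 0 (2 * Real.pi) γ hbv ε hε
    refine ⟨T, hT, fun s hs t ht heq => ?_⟩
    exact hinj hs ht (hTinj _ (mem_image_of_mem γ (Ico_subset_Icc_self hs)) _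
      (mem_image_of_mem γ (Ico_subset_Icc_self ht)) heq)
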